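/- Let n ≥ 1 be an integer and m > 1 real. Let A, ω, R > 0 and R/2 < B₀ < R satisfy ω/A > 1 + 2(m−1)(n−1)(R−B₀)/R, and define H(x,t) = A · max(|x| + ωt − B₀, 0). Then H is a classical free-boundary supersolution of (PME) (that is, of (PME–D) with Φ ≡ 0) in the domain {|x| ≤ R} × [−(R−B₀)/ω, 0]; in particular, at every point (x,t) of this domain with H(x,t) > 0 one has ∂_t H ≥ (m−1) H ΔH + |∇H|², and on the free boundary {|x| = B₀ − ωt} one has |∇H| = A > 0 and ∂_t H = Aω ≥ A² = |∇H|². -/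

import Mathlib

open Set Metric Filter Topology MeasureTheory
open scoped RealInnerProductSpace

noncomputable section

abbrev Euc (n : ℕ) := EuclideanSpace ℝ (Fin n)

variable {n : ℕ}

/-- Spatial Laplacian: sum of pure second partial derivatives. -/
def lap (f : Euc n → ℝ) (x : Euc n) : ℝ :=
  ∑ i : Fin n,
    fderiv ℝ (fun y => fderiv ℝ f y (EuclideanSpace.single i 1)) x (EuclideanSpace.single i 1)

/-- Time derivative of `u(x, ·)`. -/
def dt (u : Euc n → ℝ → ℝ) (x : Euc n) (t : ℝ) : ℝ := deriv (fun s => u x s) t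

/-- Spatial gradient of `u(·, t)`. -/
def gradx (u : Euc n → ℝ → ℝ) (x : Euc n) (t : ℝ) : Euc n := gradient (fun y => u y t) x

/-- Spatial Laplacian of `u(·, t)`. -/
def lapx (u : Euc n → ℝ → ℝ) (x : Euc n) (t : ℝ) : ℝ := lap (fun y => u y t) x

/-- Right-hand side of the pressure equation (PME–D):
`(m−1) u Δu + |∇u|² + ∇u·∇Φ + (m−1) u ΔΦ`. -/
def pmeDrhs (m : ℝ) (Φ : Euc n → ℝ) (u : Euc n → ℝ → ℝ) (x : Euc n) (t : ℝ) : ℝ :=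
  (m - 1) * u x t * lapx u x t + ‖gradx u x t‖ ^ 2
    + ⟪gradx u x t, gradient Φ x⟫ + (m - 1) * u x t * lap Φ x

/-- RHS used in the viscosity inequalities: `(m−1)φΔφ + |∇φ|² + ∇·(φ∇Φ)`. -/
def pmeDviscRhs (m : ℝ) (Φ : Euc n → ℝ) (u : Euc n → ℝ → ℝ) (x : Euc n) (t : ℝ) : ℝ :=
  (m - 1) * u x t * lapx u x t + ‖gradx u x t‖ ^ 2
    + ⟪gradx u x t, gradient Φ x⟫ + u x t * lap Φ x

/-- A bounded open set with smooth boundary. -/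
def IsSmoothDomain (U : Set (Euc n)) : Prop :=
  IsOpen U ∧ Bornology.IsBounded U ∧
    ∀ x ∈ frontier U, ∃ (V : Set (Euc n)) (f : Euc n → ℝ),
      IsOpen V ∧ x ∈ V ∧ ContDiff ℝ (⊤ : ℕ∞) f ∧ (∀ y ∈ V, (y ∈ U ↔ f y < 0)) ∧
        ∀ y ∈ V, fderiv ℝ f y ≠ 0

/-- A cylinder-like space–time domain `⋃_{t₁ ≤ t ≤ t₂} Σ(t) × {t}`. -/
structure CylDomain (n : ℕ) where
  t1 : ℝ
  t2 : ℝ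
  t1_le_t2 : t1 ≤ t2
  sec : ℝ → Set (Euc n)
  smooth_sec : ∀ t ∈ Icc t1 t2, IsSmoothDomain (sec t)

def CylDomain.carrier (S : CylDomain n) : Set (Euc n × ℝ) :=
  {p | p.2 ∈ Icc S.t1 S.t2 ∧ p.1 ∈ S.sec p.2}

def CylDomain.parabolicBoundary (S : CylDomain n) : Set (Euc n × ℝ) :=
  (closure (S.sec S.t1) ×ˢ ({S.t1} : Set ℝ)) ∪
    {p | p.2 ∈ Icc S.t1 S.t2 ∧ p.1 ∈ frontier (S.sec p.2)}

/-- `C^{2,1}` regularity (two continuous derivatives in space, one in time) on a set. -/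
def C21On (φ : Euc n → ℝ → ℝ) (S : Set (Euc n × ℝ)) : Prop :=
  ContinuousOn (fun p : Euc n × ℝ => φ p.1 p.2) S ∧
  ∀ p ∈ S,
    ContDiffAt ℝ 2 (fun x => φ x p.2) p.1 ∧
    DifferentiableAt ℝ (fun s => φ p.1 s) p.2 ∧
    ContinuousWithinAt (fun q : Euc n × ℝ => dt φ q.1 q.2) S p ∧
    ContinuousWithinAt (fun q : Euc n × ℝ => gradx φ q.1 q.2) S p ∧
    ContinuousWithinAt (fun q : Euc n × ℝ => lapx φ q.1 q.2) S p

/-- Space–time positivity set of `u`. -/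
def PosSet (u : Euc n → ℝ → ℝ) : Set (Euc n × ℝ) := {q : Euc n × ℝ | 0 < u q.1 q.2}

/-- Classical free-boundary subsolution of (PME–D) in `S`. -/
structure ClassicalFBSub (m : ℝ) (Φ : Euc n → ℝ) (u : Euc n → ℝ → ℝ)
    (S : Set (Euc n × ℝ)) : Prop where
  nonneg : ∀ p ∈ S, 0 ≤ u p.1 p.2
  cont : ContinuousOn (fun p : Euc n × ℝ => u p.1 p.2) S
  reg : C21On u (S ∩ PosSet u)
  pde : ∀ p ∈ S ∩ PosSet u, dt u p.1 p.2 ≤ pmeDrhs m Φ u p.1 p.2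
  bdry : ∀ p ∈ S ∩ frontier (PosSet u), ∃ (G : Euc n) (T : ℝ),
    Tendsto (fun q : Euc n × ℝ => gradx u q.1 q.2) (𝓝[PosSet u] p) (𝓝 G) ∧
    Tendsto (fun q : Euc n × ℝ => dt u q.1 q.2) (𝓝[PosSet u] p) (𝓝 T) ∧
    0 < ‖G‖ ∧ T ≤ ‖G‖ ^ 2 + ⟪gradient Φ p.1, G⟫

/-- Classical free-boundary supersolution of (PME–D) in `S`. -/
structure ClassicalFBSuper (m : ℝ) (Φ : Euc n → ℝ) (u : Euc n → ℝ → ℝ)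
    (S : Set (Euc n × ℝ)) : Prop where
  nonneg : ∀ p ∈ S, 0 ≤ u p.1 p.2
  cont : ContinuousOn (fun p : Euc n × ℝ => u p.1 p.2) S
  reg : C21On u (S ∩ PosSet u)
  pde : ∀ p ∈ S ∩ PosSet u, pmeDrhs m Φ u p.1 p.2 ≤ dt u p.1 p.2
  bdry : ∀ p ∈ S ∩ frontier (PosSet u), ∃ (G : Euc n) (T : ℝ),
    Tendsto (fun q : Euc n × ℝ => gradx u q.1 q.2) (𝓝[PosSet u] p) (𝓝 G) ∧
    Tendsto (fun q : Euc n × ℝ => dt u q.1 q.2) (𝓝[PosSet u] p) (𝓝 T) ∧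
    0 < ‖G‖ ∧ ‖G‖ ^ 2 + ⟪gradient Φ p.1, G⟫ ≤ T

/-- `φ` touches `u` from above at `p₀` in `S`. -/
def TouchesAbove (φ u : Euc n → ℝ → ℝ) (S : Set (Euc n × ℝ)) (p₀ : Euc n × ℝ) : Prop :=
  p₀ ∈ S ∧ φ p₀.1 p₀.2 = u p₀.1 p₀.2 ∧
    ∀ᶠ q in 𝓝[S ∩ {q : Euc n × ℝ | q.2 ≤ p₀.2}] p₀, u q.1 q.2 ≤ φ q.1 q.2

/-- `φ` touches `u` from below at `p₀` in `S`. -/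
def TouchesBelow (φ u : Euc n → ℝ → ℝ) (S : Set (Euc n × ℝ)) (p₀ : Euc n × ℝ) : Prop :=
  p₀ ∈ S ∧ φ p₀.1 p₀.2 = u p₀.1 p₀.2 ∧
    ∀ᶠ q in 𝓝[S ∩ {q : Euc n × ℝ | q.2 ≤ p₀.2}] p₀, φ q.1 q.2 ≤ u q.1 q.2

/-- Strictly separated data `u₀ ≺ v₀`. -/
def Prec (u₀ v₀ : Euc n → ℝ) : Prop :=
  IsCompact (closure {x | u₀ x ≠ 0}) ∧
  closure {x | u₀ x ≠ 0} ⊆ interior (closure {x | v₀ x ≠ 0}) ∧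
  ∀ x ∈ closure {x | u₀ x ≠ 0}, u₀ x < v₀ x

/-- `f ≺ g` on a space–time set `S`. -/
def PrecOn (f g : Euc n → ℝ → ℝ) (S : Set (Euc n × ℝ)) : Prop :=
  closure {p ∈ S | 0 < f p.1 p.2} ⊆ PosSet g ∧
  ∀ p ∈ S, 0 < f p.1 p.2 → f p.1 p.2 < g p.1 p.2

/-- Viscosity subsolution of (PME–D) in `D`. -/
def ViscSub (m : ℝ) (Φ : Euc n → ℝ) (u : Euc n → ℝ → ℝ) (D : Set (Euc n × ℝ)) : Prop :=
  ContinuousOn (fun p : Euc n × ℝ => u p.1 p.2) D ∧ (∀ p ∈ D, 0 ≤ u p.1 p.2) ∧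
  ∀ Sg : CylDomain n, Sg.carrier ⊆ D →
    ∀ φ : Euc n → ℝ → ℝ, C21On φ Sg.carrier →
      ∀ p₀ : Euc n × ℝ, TouchesAbove φ u Sg.carrier p₀ →
        dt φ p₀.1 p₀.2 ≤ pmeDviscRhs m Φ φ p₀.1 p₀.2

/-- Viscosity supersolution of (PME–D) in `D`. -/
def ViscSuper (m : ℝ) (Φ : Euc n → ℝ) (u : Euc n → ℝ → ℝ) (D : Set (Euc n × ℝ)) : Prop :=
  ContinuousOn (fun p : Euc n × ℝ => u p.1 p.2) D ∧ (∀ p ∈ D, 0 ≤ u p.1 p.2) ∧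
  (∀ Sg : CylDomain n, Sg.carrier ⊆ D →
    ∀ φ : Euc n → ℝ → ℝ, C21On φ Sg.carrier →
      ∀ p₀ : Euc n × ℝ, TouchesBelow φ u Sg.carrier p₀ → 0 < u p₀.1 p₀.2 →
        pmeDviscRhs m Φ φ p₀.1 p₀.2 ≤ dt φ p₀.1 p₀.2) ∧
  (∀ Sg : CylDomain n, Sg.carrier ⊆ D →
    ∀ φ : Euc n → ℝ → ℝ, ClassicalFBSub m Φ φ Sg.carrier →
      PrecOn φ u Sg.parabolicBoundary →
        ∀ p ∈ Sg.carrier, φ p.1 p.2 ≤ u p.1 p.2)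

/-- Viscosity solution of (PME–D) in `D` with initial data `u₀`
(attained uniformly as `t → 0⁺`). -/
def ViscSolution (m : ℝ) (Φ : Euc n → ℝ) (u₀ : Euc n → ℝ) (u : Euc n → ℝ → ℝ)
    (D : Set (Euc n × ℝ)) : Prop :=
  ViscSub m Φ u D ∧ ViscSuper m Φ u D ∧
    TendstoUniformly (fun t (x : Euc n) => u x t) u₀ (𝓝[>] (0 : ℝ))



section Helpers

lemma myHasFDerivAt_norm {x : Euc n} (hx : x ≠ 0) :
    HasFDerivAt (fun y : Euc n => ‖y‖) (‖x‖⁻¹ • (innerSL ℝ x)) x := by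
  have h1 : HasFDerivAt (fun y : Euc n => ‖y‖ ^ 2) (2 • (innerSL ℝ x)) x :=
    (hasStrictFDerivAt_norm_sq x).hasFDerivAt
  have hs : (‖x‖ : ℝ) ^ 2 ≠ 0 := pow_ne_zero _ (norm_ne_zero_iff.2 hx)
  have h2 := (Real.hasDerivAt_sqrt hs).comp_hasFDerivAt x h1
  rw [show ((fun x => Real.sqrt x) ∘ fun y : Euc n => ‖y‖ ^ 2) = fun y : Euc n => ‖y‖ from by
    funext y; simp [Function.comp, Real.sqrt_sq (norm_nonneg y)]] at h2
  have heq : (1 / (2 * Real.sqrt (‖x‖ ^ 2))) • 2 • (innerSL ℝ x) = ‖x‖⁻¹ • (innerSL ℝ x) := by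
    ext v
    simp [Real.sqrt_sq (norm_nonneg x)]
    ring
  rw [heq] at h2
  exact h2

lemma gsHasFDerivAt (A c : ℝ) {x : Euc n} (hx : x ≠ 0) :
    HasFDerivAt (fun y : Euc n => A * (‖y‖ + c)) (A • (‖x‖⁻¹ • (innerSL ℝ x))) x := by
  have := ((myHasFDerivAt_norm hx).add_const c).const_mul A
  simpa using this

lemma gsGradient (A c : ℝ) {x : Euc n} (hx : x ≠ 0) :
    gradient (fun y : Euc n => A * (‖y‖ + c)) x = (A * ‖x‖⁻¹) • x := by
  have h := gsHasFDerivAt (n := n) A c hx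
  have h2 : HasGradientAt (fun y : Euc n => A * (‖y‖ + c)) ((A * ‖x‖⁻¹) • x) x := by
    rw [hasGradientAt_iff_hasFDerivAt]
    refine h.congr_fderiv ?_
    ext v
    simp [InnerProductSpace.toDual_apply_apply, real_inner_smul_left]
    ring
  exact h2.gradient

lemma gsFDerivApply (A c : ℝ) {x : Euc n} (hx : x ≠ 0) (e : Euc n) :
    fderiv ℝ (fun y : Euc n => A * (‖y‖ + c)) x e = A * (‖x‖⁻¹ * ⟪x, e⟫) := by
  rw [(gsHasFDerivAt A c hx).fderiv]
  simp [mul_assoc]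

lemma innerHasFDerivAt (e x : Euc n) :
    HasFDerivAt (fun y : Euc n => (⟪y, e⟫ : ℝ)) (innerSL ℝ e) x := by
  have : (fun y : Euc n => (⟪y, e⟫ : ℝ)) = fun y => innerSL ℝ e y := by
    funext y; simp [real_inner_comm, mul_comm]
  rw [this]
  exact (innerSL ℝ e).hasFDerivAt

lemma secondHasFDerivAt (A : ℝ) {x : Euc n} (hx : x ≠ 0) (e : Euc n) :
    HasFDerivAt (fun y : Euc n => A * (‖y‖⁻¹ * ⟪y, e⟫))
      (A • ((‖x‖⁻¹ • (innerSL ℝ e)) +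
        ((⟪x, e⟫ : ℝ) • ((-(‖x‖ ^ 2)⁻¹) • (‖x‖⁻¹ • (innerSL ℝ x)))))) x := by
  have h1 : HasFDerivAt (fun y : Euc n => ‖y‖⁻¹)
      ((-(‖x‖ ^ 2)⁻¹) • (‖x‖⁻¹ • (innerSL ℝ x))) x :=
    (hasDerivAt_inv (norm_ne_zero_iff.2 hx)).comp_hasFDerivAt x (myHasFDerivAt_norm hx)
  have h2 := (h1.mul (innerHasFDerivAt e x)).const_mul A
  exact h2

lemma sumSq (x : Euc n) : ∑ i, (x i) ^ 2 = ‖x‖ ^ 2 := by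
  rw [EuclideanSpace.norm_eq, Real.sq_sqrt (by positivity)]
  simp [Real.norm_eq_abs, sq_abs]

lemma gsLap (A c : ℝ) {x : Euc n} (hx : x ≠ 0) :
    lap (fun y : Euc n => A * (‖y‖ + c)) x = A * ((n : ℝ) - 1) * ‖x‖⁻¹ := by
  have hr : (0:ℝ) < ‖x‖ := norm_pos_iff.2 hx
  have key : ∀ i : Fin n,
      fderiv ℝ (fun y => fderiv ℝ (fun y : Euc n => A * (‖y‖ + c)) y (EuclideanSpace.single i 1)) x
        (EuclideanSpace.single i 1)
      = A * ‖x‖⁻¹ - (A * ((‖x‖ ^ 2)⁻¹ * ‖x‖⁻¹)) * (x i) ^ 2 := by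
    intro i
    set e : Euc n := EuclideanSpace.single i (1:ℝ) with he
    have hev : (fun y => fderiv ℝ (fun y : Euc n => A * (‖y‖ + c)) y e)
        =ᶠ[𝓝 x] (fun y : Euc n => A * (‖y‖⁻¹ * ⟪y, e⟫)) := by
      filter_upwards [IsOpen.mem_nhds isOpen_compl_singleton hx] with y hy
      exact gsFDerivApply A c hy e
    rw [hev.fderiv_eq, (secondHasFDerivAt A hx e).fderiv]
    have h1 : (⟪x, e⟫ : ℝ) = x i := by
      simp [he, EuclideanSpace.inner_single_right]
    have h2 : (⟪e, e⟫ : ℝ) = 1 := by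
      simp [he, EuclideanSpace.inner_single_right, EuclideanSpace.single_apply]
    simp only [ContinuousLinearMap.smul_apply, ContinuousLinearMap.add_apply, innerSL_apply_apply,
      smul_eq_mul, h1, h2]
    ring
  unfold lap
  rw [Finset.sum_congr rfl (fun i _ => key i), Finset.sum_sub_distrib, Finset.sum_const,
    Finset.card_univ, Fintype.card_fin, ← Finset.mul_sum, sumSq]
  field_simp
  linear_combination (A * (n:ℝ)) * mul_inv_cancel₀ hr.ne'

lemma lapZero (x : Euc n) : lap (fun _ : Euc n => (0:ℝ)) x = 0 := by
  unfold lap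
  simp [fderiv_const]

lemma gradZero (x : Euc n) : gradient (fun _ : Euc n => (0:ℝ)) x = 0 := by
  have h : HasGradientAt (fun _ : Euc n => (0:ℝ)) 0 x := by
    rw [hasGradientAt_iff_hasFDerivAt]
    simpa using hasFDerivAt_const (0:ℝ) x
  exact h.gradient

lemma dtHasDerivAt (A ω B₀ : ℝ) {x : Euc n} {t : ℝ} (h : B₀ < ‖x‖ + ω * t) :
    HasDerivAt (fun s => A * max (‖x‖ + ω * s - B₀) 0) (A * ω) t := by
  have hd : HasDerivAt (fun s : ℝ => A * (‖x‖ + ω * s - B₀)) (A * ω) t := by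
    have := (((hasDerivAt_id t).const_mul ω).const_add ‖x‖).sub_const B₀
    simpa using this.const_mul A
  apply hd.congr_of_eventuallyEq
  have hmem : {s : ℝ | B₀ < ‖x‖ + ω * s} ∈ 𝓝 t :=
    (isOpen_lt continuous_const (by continuity)).mem_nhds h
  filter_upwards [hmem] with s hs
  rw [max_eq_left (by linarith)]

end Helpers

set_option maxHeartbeats 2000000 in
/-- The spherical traveling wave `H(x,t) = A(|x| + ωt − B₀)₊` is a classical
free-boundary supersolution of (PME) in `{|x| ≤ R} × [−(R−B₀)/ω, 0]`. -/
theorem traveling_wave_is_classical_supersolution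
    (n : ℕ) (hn : 1 ≤ n) (m : ℝ) (hm : 1 < m)
    (A ω R B₀ : ℝ) (hA : 0 < A) (hω : 0 < ω) (hR : 0 < R)
    (hB₀ : R / 2 < B₀ ∧ B₀ < R)
    (hspeed : ω / A > 1 + 2 * (m - 1) * ((n : ℝ) - 1) * (R - B₀) / R)
    (H : Euc n → ℝ → ℝ)
    (hH : ∀ (x : Euc n) (t : ℝ), H x t = A * max (‖x‖ + ω * t - B₀) 0)
    (S : Set (Euc n × ℝ))
    (hS : S = {p : Euc n × ℝ | ‖p.1‖ ≤ R ∧ p.2 ∈ Icc (-(R - B₀) / ω) 0}) :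
    ClassicalFBSuper m (fun _ => (0 : ℝ)) H S ∧
    (∀ p ∈ S, 0 < H p.1 p.2 →
      (m - 1) * H p.1 p.2 * lapx H p.1 p.2 + ‖gradx H p.1 p.2‖ ^ 2 ≤ dt H p.1 p.2) ∧
    (∀ p ∈ S, ‖p.1‖ = B₀ - ω * p.2 →
      ∃ G : Euc n,
        Tendsto (fun q : Euc n × ℝ => gradx H q.1 q.2) (𝓝[PosSet H] p) (𝓝 G) ∧
        Tendsto (fun q : Euc n × ℝ => dt H q.1 q.2) (𝓝[PosSet H] p) (𝓝 (A * ω)) ∧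
        ‖G‖ = A ∧ 0 < A ∧ A * ω ≥ A ^ 2) :=
  by
  have hn1 : (1:ℝ) ≤ (n:ℝ) := by exact_mod_cast hn
  have hB0pos : 0 < B₀ := lt_trans (by linarith) hB₀.1
  have hRB : 0 < R - B₀ := by linarith [hB₀.2]
  have hK : 0 ≤ (m - 1) * ((n:ℝ) - 1) := mul_nonneg (by linarith) (by linarith)
  set X : ℝ := 2 * (m - 1) * ((n : ℝ) - 1) * (R - B₀) / R with hX
  have hXnn : 0 ≤ X := div_nonneg (by nlinarith) hR.le
  have hXval : X * R = 2 * (m - 1) * ((n : ℝ) - 1) * (R - B₀) := by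
    rw [hX]; field_simp
  have hs1 : (1 + X) * A < ω := (lt_div_iff₀ hA).1 hspeed
  have hωA : A < ω := by nlinarith
  -- characterization of the positivity set
  have hPos : ∀ q : Euc n × ℝ, q ∈ PosSet H ↔ B₀ < ‖q.1‖ + ω * q.2 := by
    intro q
    simp only [PosSet, mem_setOf_eq, hH]
    constructor
    · intro hq
      by_contra hc
      push_neg at hc
      rw [max_eq_right (by linarith)] at hq
      simp at hq
    · intro hq
      rw [max_eq_left (by linarith)]
      exact mul_pos hA (by linarith)
  have hval : ∀ q : Euc n × ℝ, q ∈ PosSet H → H q.1 q.2 = A * (‖q.1‖ + ω * q.2 - B₀) := by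
    intro q hq
    rw [hH, max_eq_left (by linarith [(hPos q).1 hq])]
  have hopenPos : IsOpen (PosSet H) := by
    have : PosSet H = {q : Euc n × ℝ | B₀ < ‖q.1‖ + ω * q.2} := Set.ext hPos
    rw [this]
    exact isOpen_lt continuous_const (continuous_fst.norm.add (continuous_const.mul continuous_snd))
  -- points of S have nonpositive time and norm bound
  have hSmem : ∀ q : Euc n × ℝ, q ∈ S → ‖q.1‖ ≤ R ∧ -(R - B₀) / ω ≤ q.2 ∧ q.2 ≤ 0 := by
    intro q hq
    rw [hS] at hq
    exact ⟨hq.1, hq.2.1, hq.2.2⟩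
  have hSP : ∀ q : Euc n × ℝ, q ∈ S ∩ PosSet H → B₀ < ‖q.1‖ ∧ q.1 ≠ 0 := by
    intro q hq
    have h1 := (hPos q).1 hq.2
    have h2 := (hSmem q hq.1).2.2
    have : B₀ < ‖q.1‖ := by nlinarith
    exact ⟨this, fun h => by simp [h] at this; linarith⟩
  -- spatial slice of H agrees locally with the smooth model
  have hslice : ∀ q : Euc n × ℝ, q ∈ PosSet H →
      (fun y => H y q.2) =ᶠ[𝓝 q.1] (fun y : Euc n => A * (‖y‖ + (ω * q.2 - B₀))) := by
    intro q hq
    have hU : {y : Euc n | B₀ < ‖y‖ + ω * q.2} ∈ 𝓝 q.1 :=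
      (isOpen_lt continuous_const (by continuity)).mem_nhds ((hPos q).1 hq)
    filter_upwards [hU] with y hy
    rw [hH, max_eq_left (by linarith)]
    ring
  -- gradient formula
  have hgradx : ∀ q : Euc n × ℝ, q ∈ PosSet H → q.1 ≠ 0 →
      gradx H q.1 q.2 = (A * ‖q.1‖⁻¹) • q.1 := by
    intro q hq hne
    unfold gradx
    rw [(hslice q hq).gradient_eq, gsGradient _ _ hne]
  -- time derivative formula
  have hdtform : ∀ q : Euc n × ℝ, q ∈ PosSet H → dt H q.1 q.2 = A * ω := by
    intro q hq
    unfold dt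
    rw [show (fun s => H q.1 s) = fun s => A * max (‖q.1‖ + ω * s - B₀) 0 from
      funext fun s => hH q.1 s]
    exact (dtHasDerivAt A ω B₀ ((hPos q).1 hq)).deriv
  -- Laplacian formula
  have hlapx : ∀ q : Euc n × ℝ, q ∈ PosSet H → q.1 ≠ 0 →
      lapx H q.1 q.2 = A * ((n:ℝ) - 1) * ‖q.1‖⁻¹ := by
    intro q hq hne
    unfold lapx lap
    have hU : IsOpen {y : Euc n | B₀ < ‖y‖ + ω * q.2} :=
      isOpen_lt continuous_const (by continuity)
    have hkey : ∀ i : Fin n,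
        fderiv ℝ (fun y => fderiv ℝ (fun y => H y q.2) y (EuclideanSpace.single i 1)) q.1
          (EuclideanSpace.single i 1)
        = fderiv ℝ (fun y => fderiv ℝ (fun y : Euc n => A * (‖y‖ + (ω * q.2 - B₀))) y
            (EuclideanSpace.single i 1)) q.1 (EuclideanSpace.single i 1) := by
      intro i
      have hev : (fun y => fderiv ℝ (fun y => H y q.2) y (EuclideanSpace.single i 1))
          =ᶠ[𝓝 q.1] (fun y => fderiv ℝ (fun y : Euc n => A * (‖y‖ + (ω * q.2 - B₀))) y
            (EuclideanSpace.single i 1)) := by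
        filter_upwards [hU.mem_nhds ((hPos q).1 hq)] with y hy
        have hyP : (⟨y, q.2⟩ : Euc n × ℝ) ∈ PosSet H := (hPos ⟨y, q.2⟩).2 hy
        rw [(hslice ⟨y, q.2⟩ hyP).fderiv_eq]
      rw [hev.fderiv_eq]
    rw [Finset.sum_congr rfl (fun i _ => hkey i)]
    exact gsLap A (ω * q.2 - B₀) hne
  -- H is continuous globally
  have hHcont : Continuous (fun p : Euc n × ℝ => H p.1 p.2) := by
    rw [show (fun p : Euc n × ℝ => H p.1 p.2)
        = fun p : Euc n × ℝ => A * max (‖p.1‖ + ω * p.2 - B₀) 0 from funext fun p => hH _ _]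
    exact continuous_const.mul
      ((((continuous_fst.norm).add (continuous_const.mul continuous_snd)).sub
        continuous_const).max continuous_const)
  -- key PDE inequality
  have hkeyineq : ∀ p ∈ S ∩ PosSet H,
      (m - 1) * H p.1 p.2 * lapx H p.1 p.2 + ‖gradx H p.1 p.2‖ ^ 2 ≤ dt H p.1 p.2 := by
    intro p hp
    obtain ⟨hB, hne⟩ := hSP p hp
    have hr : 0 < ‖p.1‖ := lt_trans hB0pos hB
    have hng : ‖gradx H p.1 p.2‖ = A := by
      rw [hgradx p hp.2 hne, norm_smul, Real.norm_eq_abs,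
        abs_of_pos (by positivity)]
      field_simp
    rw [hng, hdtform p hp.2, hlapx p hp.2 hne, hval p hp.2]
    set r := ‖p.1‖ with hrdef
    set c : ℝ := r + ω * p.2 - B₀ with hc
    have hc1 : 0 < c := by have := (hPos p).1 hp.2; simp only [hc]; linarith
    have hc2 : c ≤ R - B₀ := by
      have h1 := (hSmem p hp.1).1
      have h2 := (hSmem p hp.1).2.2
      simp only [hc]
      nlinarith
    have hr2 : R < 2 * r := by linarith [hB₀.1]
    have e1 : X * A ^ 2 < A * ω - A ^ 2 := by nlinarith [mul_lt_mul_of_pos_right hs1 hA]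
    have e2 : X * A ^ 2 * (R / 2) ≤ (A * ω - A ^ 2) * r := by
      have l1 : X * A ^ 2 * (R / 2) ≤ X * A ^ 2 * r :=
        mul_le_mul_of_nonneg_left (by linarith) (mul_nonneg hXnn (sq_nonneg A))
      have l2 : X * A ^ 2 * r ≤ (A * ω - A ^ 2) * r :=
        mul_le_mul_of_nonneg_right (le_of_lt e1) (by linarith)
      linarith
    have e3 : X * A ^ 2 * (R / 2) = A ^ 2 * ((m - 1) * ((n:ℝ) - 1) * (R - B₀)) := by
      linear_combination (A ^ 2 / 2) * hXval
    have e4 : (m - 1) * (A * c) * (A * ((n:ℝ) - 1)) ≤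
        A ^ 2 * ((m - 1) * ((n:ℝ) - 1) * (R - B₀)) := by
      nlinarith [mul_le_mul_of_nonneg_left hc2 (mul_nonneg hK (sq_nonneg A))]
    have hmain : (m - 1) * (A * c) * (A * ((n:ℝ) - 1)) ≤ (A * ω - A ^ 2) * r := by linarith
    have hdiv := mul_le_mul_of_nonneg_right hmain (inv_nonneg.2 hr.le)
    have hrr : (A * ω - A ^ 2) * r * r⁻¹ = A * ω - A ^ 2 := by
      rw [mul_assoc, mul_inv_cancel₀ (ne_of_gt hr), mul_one]
    have hdiv2 : (m - 1) * (A * c) * (A * ((n:ℝ) - 1)) * r⁻¹ ≤ A * ω - A ^ 2 := by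
      rw [← hrr]; exact hdiv
    nlinarith [hdiv2]
  -- limits at the free boundary
  have hbdryLim : ∀ p : Euc n × ℝ, ‖p.1‖ + ω * p.2 = B₀ → 0 < ‖p.1‖ →
      Tendsto (fun q : Euc n × ℝ => gradx H q.1 q.2) (𝓝[PosSet H] p)
        (𝓝 ((A * ‖p.1‖⁻¹) • p.1)) ∧
      Tendsto (fun q : Euc n × ℝ => dt H q.1 q.2) (𝓝[PosSet H] p) (𝓝 (A * ω)) := by
    intro p hpB hpn
    constructor
    · have hcont : ContinuousAt (fun q : Euc n × ℝ => (A * ‖q.1‖⁻¹) • q.1) p := by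
        refine ContinuousAt.smul (f := fun q : Euc n × ℝ => A * ‖q.1‖⁻¹) (g := fun q : Euc n × ℝ => q.1) ?_ ?_
        · exact continuousAt_const.mul (continuousAt_fst.norm.inv₀ (ne_of_gt hpn))
        · exact continuousAt_fst
      have ht : Tendsto (fun q : Euc n × ℝ => (A * ‖q.1‖⁻¹) • q.1) (𝓝[PosSet H] p)
          (𝓝 ((A * ‖p.1‖⁻¹) • p.1)) := hcont.continuousWithinAt
      apply ht.congr'
      have hmem : {q : Euc n × ℝ | 0 < ‖q.1‖} ∈ 𝓝[PosSet H] p :=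
        mem_nhdsWithin_of_mem_nhds
          ((isOpen_lt continuous_const continuous_fst.norm).mem_nhds hpn)
      filter_upwards [hmem, self_mem_nhdsWithin] with q h1 h2
      exact (hgradx q h2 (norm_pos_iff.1 h1)).symm
    · refine Tendsto.congr' ?_ tendsto_const_nhds
      filter_upwards [self_mem_nhdsWithin] with q hq
      exact (hdtform q hq).symm
  -- frontier points satisfy the boundary equation
  have hfront : ∀ p : Euc n × ℝ, p ∈ frontier (PosSet H) → ‖p.1‖ + ω * p.2 = B₀ := by
    intro p hp
    have hle : B₀ ≤ ‖p.1‖ + ω * p.2 := by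
      have hsub : closure (PosSet H) ⊆ {q : Euc n × ℝ | B₀ ≤ ‖q.1‖ + ω * q.2} :=
        closure_minimal (fun q hq => le_of_lt ((hPos q).1 hq))
          (isClosed_le continuous_const
            (continuous_fst.norm.add (continuous_const.mul continuous_snd)))
      exact hsub hp.1
    by_contra hcon
    have hlt : B₀ < ‖p.1‖ + ω * p.2 := lt_of_le_of_ne hle (fun h => hcon h.symm)
    have : p ∈ interior (PosSet H) := by
      rw [hopenPos.interior_eq]; exact (hPos p).2 hlt
    exact hp.2 this
  -- regularity
  have hreg : C21On H (S ∩ PosSet H) := by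
    constructor
    · exact hHcont.continuousOn
    · intro p hp
      obtain ⟨hB, hne⟩ := hSP p hp
      have hr : 0 < ‖p.1‖ := lt_trans hB0pos hB
      refine ⟨?_, ?_, ?_, ?_, ?_⟩
      · have hg : ContDiffAt ℝ 2 (fun y : Euc n => A * (‖y‖ + (ω * p.2 - B₀))) p.1 := by
          have h1 : ContDiffAt ℝ 2 (fun y : Euc n => ‖y‖) p.1 := by
            have := (contDiffAt_id (𝕜 := ℝ) (x := p.1) (n := 2)).norm ℝ (x := p.1) ?_
            · exact this
            · exact hne
          exact contDiffAt_const.mul (h1.add contDiffAt_const)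
        exact hg.congr_of_eventuallyEq (hslice p hp.2)
      · rw [show (fun s => H p.1 s) = fun s => A * max (‖p.1‖ + ω * s - B₀) 0 from
          funext fun s => hH p.1 s]
        exact (dtHasDerivAt A ω B₀ ((hPos p).1 hp.2)).differentiableAt
      · exact (continuousWithinAt_const (b := A * ω)).congr
          (fun q hq => hdtform q hq.2) (hdtform p hp.2)
      · have hcont : ContinuousAt (fun q : Euc n × ℝ => (A * ‖q.1‖⁻¹) • q.1) p := by
          refine ContinuousAt.smul (f := fun q : Euc n × ℝ => A * ‖q.1‖⁻¹) (g := fun q : Euc n × ℝ => q.1) ?_ ?_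
          · exact continuousAt_const.mul (continuousAt_fst.norm.inv₀ (ne_of_gt hr))
          · exact continuousAt_fst
        exact hcont.continuousWithinAt.congr
          (fun q hq => hgradx q hq.2 (hSP q hq).2) (hgradx p hp.2 hne)
      · have hcont : ContinuousAt (fun q : Euc n × ℝ => A * ((n:ℝ) - 1) * ‖q.1‖⁻¹) p :=
          continuousAt_const.mul (continuousAt_fst.norm.inv₀ (ne_of_gt hr))
        exact hcont.continuousWithinAt.congr
          (fun q hq => hlapx q hq.2 (hSP q hq).2) (hlapx p hp.2 hne)
  -- boundary condition for the supersolution structure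
  have hbdry : ∀ p ∈ S ∩ frontier (PosSet H), ∃ (G : Euc n) (T : ℝ),
      Tendsto (fun q : Euc n × ℝ => gradx H q.1 q.2) (𝓝[PosSet H] p) (𝓝 G) ∧
      Tendsto (fun q : Euc n × ℝ => dt H q.1 q.2) (𝓝[PosSet H] p) (𝓝 T) ∧
      0 < ‖G‖ ∧ ‖G‖ ^ 2 + ⟪gradient (fun _ : Euc n => (0:ℝ)) p.1, G⟫ ≤ T := by
    intro p hp
    have hpB : ‖p.1‖ + ω * p.2 = B₀ := hfront p hp.2
    have ht0 : p.2 ≤ 0 := (hSmem p hp.1).2.2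
    have hpn : 0 < ‖p.1‖ := by nlinarith
    obtain ⟨h1, h2⟩ := hbdryLim p hpB hpn
    refine ⟨(A * ‖p.1‖⁻¹) • p.1, A * ω, h1, h2, ?_, ?_⟩
    · rw [norm_smul, Real.norm_eq_abs, abs_of_pos (by positivity)]
      have : A * ‖p.1‖⁻¹ * ‖p.1‖ = A := by field_simp
      rw [this]; exact hA
    · rw [norm_smul, Real.norm_eq_abs, abs_of_pos (by positivity)]
      have hGA : A * ‖p.1‖⁻¹ * ‖p.1‖ = A := by field_simp
      rw [hGA, gradZero]
      simp only [inner_zero_left, add_zero]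
      nlinarith
  refine ⟨⟨?_, hHcont.continuousOn, hreg, ?_, hbdry⟩, fun p hp hpos => hkeyineq p ⟨hp, hpos⟩, ?_⟩
  · intro p _
    rw [hH]
    exact mul_nonneg hA.le (le_max_right _ 0)
  · intro p hp
    have hred : pmeDrhs m (fun _ => (0:ℝ)) H p.1 p.2
        = (m - 1) * H p.1 p.2 * lapx H p.1 p.2 + ‖gradx H p.1 p.2‖ ^ 2 := by
      unfold pmeDrhs
      rw [gradZero, lapZero]
      simp
    rw [hred]
    exact hkeyineq p hp
  · intro p hp hpB
    have ht0 : p.2 ≤ 0 := (hSmem p hp).2.2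
    have hpn : 0 < ‖p.1‖ := by nlinarith
    have hpB' : ‖p.1‖ + ω * p.2 = B₀ := by linarith
    obtain ⟨h1, h2⟩ := hbdryLim p hpB' hpn
    refine ⟨(A * ‖p.1‖⁻¹) • p.1, h1, h2, ?_, hA, ?_⟩
    · rw [norm_smul, Real.norm_eq_abs, abs_of_pos (by positivity)]
      field_simp
    · nlinarith


end
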